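/- For every sequence i : ℕ → {0,1} and every n ≥ 1, the barycentric triangle Γ_{(e,12,e)}(i₁,…,iₙ) contains the point (1,0) and also contains a point of the form (t,t) with 0 ≤ t ≤ 1. Consequently diam(Γ_{(e,12,e)}(i₁,…,iₙ)) ≥ √2/2 for every n, so the nested sequence of triangles never converges to a single point (the intersection over all n contains at least two points). -/

import Mathlib

open Matrix MeasureTheory Filter

noncomputable section

/-- A point of ℝ² with the Euclidean metric. -/
def euclPt (x y : ℝ) : EuclideanSpace ℝ (Fin 2) :=
  (WithLp.equiv 2 (Fin 2 → ℝ)).symm ![x, y]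

/-- Projection π(a,b,c) = (b/a, c/a), landing in Euclidean ℝ². -/
def projE (v : Fin 3 → ℝ) : EuclideanSpace ℝ (Fin 2) := euclPt (v 1 / v 0) (v 2 / v 0)

def Vmat : Matrix (Fin 3) (Fin 3) ℝ := !![1,1,1; 0,1,1; 0,0,1]

def prodSeq (C : Fin 2 → Matrix (Fin 3) (Fin 3) ℝ) (i : ℕ → Fin 2) :
    ℕ → Matrix (Fin 3) (Fin 3) ℝ
  | 0 => 1
  | n + 1 => prodSeq C i n * C (i (n + 1))

/-- The subtriangle: convex hull of the π-images of the columns of V·C_{i₁}⋯C_{iₙ}. -/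
def subTriE (C : Fin 2 → Matrix (Fin 3) (Fin 3) ℝ) (i : ℕ → Fin 2) (n : ℕ) :
    Set (EuclideanSpace ℝ (Fin 2)) :=
  convexHull ℝ (Set.range fun j : Fin 3 => projE fun k => (Vmat * prodSeq C i n) k j)

/-- The barycentric matrices G₀(e,12,e), G₁(e,12,e). -/
def Ge12e : Fin 2 → Matrix (Fin 3) (Fin 3) ℝ :=
  ![!![0,0,1/2; 0,1,0; 1,0,1/2], !![1,0,1/2; 0,1,0; 0,0,1/2]]

/-! ### Auxiliary machinery -/

/-- The diagonal parameters of columns 0 and 2 of `Vmat * prodSeq Ge12e i n`. -/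
def abSeq (i : ℕ → Fin 2) : ℕ → ℝ × ℝ
  | 0 => (0, 1)
  | n + 1 => (if i (n+1) = 0 then (abSeq i n).2 else (abSeq i n).1,
      ((abSeq i n).1 + (abSeq i n).2) / 2)

lemma colLemma (i : ℕ → Fin 2) (n : ℕ) :
    ∀ k, (Vmat * prodSeq Ge12e i n) k 0 = ![1, (abSeq i n).1, (abSeq i n).1] k ∧
      (Vmat * prodSeq Ge12e i n) k 1 = ![1, 1, 0] k ∧
      (Vmat * prodSeq Ge12e i n) k 2 = ![1, (abSeq i n).2, (abSeq i n).2] k := by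
  induction n with
  | zero =>
    intro k
    have h : Vmat * prodSeq Ge12e i 0 = Vmat := by
      rw [show prodSeq Ge12e i 0 = 1 from rfl, mul_one]
    rw [h]
    fin_cases k <;> norm_num [Vmat, abSeq, Matrix.cons_val_two, Matrix.vecHead, Matrix.vecTail]
  | succ n ih =>
    intro k
    set M := Vmat * prodSeq Ge12e i n with hM
    have key : Vmat * prodSeq Ge12e i (n+1) = M * Ge12e (i (n+1)) := by
      rw [hM, mul_assoc]; rfl
    clear_value M
    obtain ⟨h0, h1, h2⟩ := ih k
    have hi : i (n+1) = 0 ∨ i (n+1) = 1 := by omega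
    rcases hi with hi | hi <;>
      [rw [key, hi]; rw [key, hi]] <;>
      simp only [Matrix.mul_apply, Fin.sum_univ_three, h0, h1, h2] <;>
      norm_num [Ge12e, Matrix.cons_val_two, Matrix.vecHead, Matrix.vecTail] <;>
      simp only [abSeq, hi] <;>
      fin_cases k <;> norm_num <;> ring

lemma euclPt_apply_zero (x y : ℝ) : euclPt x y 0 = x := rfl
lemma euclPt_apply_one (x y : ℝ) : euclPt x y 1 = y := rfl

lemma euclPt_smul (c x y : ℝ) : c • euclPt x y = euclPt (c*x) (c*y) := by
  ext j; fin_cases j <;> simp [euclPt]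

lemma euclPt_add (x y z w : ℝ) : euclPt x y + euclPt z w = euclPt (x+z) (y+w) := by
  ext j; fin_cases j <;> simp [euclPt]

lemma dist_ge (t : ℝ) : Real.sqrt 2 / 2 ≤ dist (euclPt 1 0) (euclPt t t) := by
  rw [EuclideanSpace.dist_eq]
  have h : Real.sqrt 2 / 2 = Real.sqrt (1/2) := by
    rw [show (1/2:ℝ) = 2/4 by norm_num, Real.sqrt_div (by norm_num),
      show (4:ℝ) = 2^2 by norm_num, Real.sqrt_sq (by norm_num)]
  rw [h]
  apply Real.sqrt_le_sqrt
  simp [euclPt, Fin.sum_univ_two, Real.dist_eq]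
  nlinarith [sq_nonneg (2*t-1)]

/-- The three vertices of the `n`-th triangle. -/
lemma vertexLemma (i : ℕ → Fin 2) (n : ℕ) :
    euclPt (abSeq i n).1 (abSeq i n).1 ∈ subTriE Ge12e i n ∧
    euclPt 1 0 ∈ subTriE Ge12e i n ∧
    euclPt (abSeq i n).2 (abSeq i n).2 ∈ subTriE Ge12e i n := by
  have h := colLemma i n
  have v0 : projE (fun k => (Vmat * prodSeq Ge12e i n) k 0)
      = euclPt (abSeq i n).1 (abSeq i n).1 := by
    simp [projE, (h 0).1, (h 1).1, (h 2).1]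
  have v1 : projE (fun k => (Vmat * prodSeq Ge12e i n) k 1) = euclPt 1 0 := by
    simp [projE, (h 0).2.1, (h 1).2.1, (h 2).2.1]
  have v2 : projE (fun k => (Vmat * prodSeq Ge12e i n) k 2)
      = euclPt (abSeq i n).2 (abSeq i n).2 := by
    simp [projE, (h 0).2.2, (h 1).2.2, (h 2).2.2]
  refine ⟨?_, ?_, ?_⟩ <;> apply subset_convexHull
  · exact ⟨0, v0⟩
  · exact ⟨1, v1⟩
  · exact ⟨2, v2⟩

lemma abBounds (i : ℕ → Fin 2) (n : ℕ) :
    0 ≤ (abSeq i n).1 ∧ (abSeq i n).1 ≤ 1 ∧ 0 ≤ (abSeq i n).2 ∧ (abSeq i n).2 ≤ 1 := by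
  induction n with
  | zero => norm_num [abSeq]
  | succ n ih =>
    obtain ⟨h1, h2, h3, h4⟩ := ih
    by_cases hi : i (n+1) = 0 <;>
      simp only [abSeq, hi, if_true, if_false, reduceIte] <;>
      refine ⟨by linarith, by linarith, by linarith, by linarith⟩

lemma minMono (i : ℕ → Fin 2) : Monotone (fun n => min (abSeq i n).1 (abSeq i n).2) := by
  apply monotone_nat_of_le_succ
  intro n
  have h1 := min_le_left (abSeq i n).1 (abSeq i n).2
  have h2 := min_le_right (abSeq i n).1 (abSeq i n).2
  by_cases hi : i (n+1) = 0 <;>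
    simp only [abSeq, hi, if_true, if_false, reduceIte] <;>
    exact le_min (by linarith) (by linarith)

lemma maxAnti (i : ℕ → Fin 2) : Antitone (fun n => max (abSeq i n).1 (abSeq i n).2) := by
  apply antitone_nat_of_succ_le
  intro n
  have h1 := le_max_left (abSeq i n).1 (abSeq i n).2
  have h2 := le_max_right (abSeq i n).1 (abSeq i n).2
  by_cases hi : i (n+1) = 0 <;>
    simp only [abSeq, hi, if_true, if_false, reduceIte] <;>
    exact max_le (by linarith) (by linarith)

lemma minLeMax (i : ℕ → Fin 2) (m n : ℕ) :
    min (abSeq i m).1 (abSeq i m).2 ≤ max (abSeq i n).1 (abSeq i n).2 := by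
  rcases le_total m n with h | h
  · exact le_trans (minMono i h) (min_le_max)
  · exact le_trans (min_le_max) (maxAnti i h)

/-- Any diagonal point between the two diagonal vertices lies in the triangle. -/
lemma diagMem (i : ℕ → Fin 2) (n : ℕ) (s : ℝ)
    (h1 : min (abSeq i n).1 (abSeq i n).2 ≤ s) (h2 : s ≤ max (abSeq i n).1 (abSeq i n).2) :
    euclPt s s ∈ subTriE Ge12e i n := by
  set a := (abSeq i n).1
  set b := (abSeq i n).2
  have hseg : s ∈ segment ℝ a b := by
    rw [segment_eq_uIcc]
    exact ⟨h1, h2⟩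
  obtain ⟨c, d, hc, hd, hcd, hs⟩ := hseg
  have hA := (vertexLemma i n).1
  have hB := (vertexLemma i n).2.2
  have : euclPt s s = c • euclPt a a + d • euclPt b b := by
    rw [euclPt_smul, euclPt_smul, euclPt_add, ← hs]; simp [smul_eq_mul]
  rw [this]
  exact (convex_convexHull ℝ _) hA hB hc hd hcd

theorem stmt9 (i : ℕ → Fin 2) :
    (∀ n : ℕ, 1 ≤ n →
      euclPt 1 0 ∈ subTriE Ge12e i n ∧
      (∃ t : ℝ, 0 ≤ t ∧ t ≤ 1 ∧ euclPt t t ∈ subTriE Ge12e i n) ∧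
      Real.sqrt 2 / 2 ≤ Metric.diam (subTriE Ge12e i n)) ∧
    ∃ pt qt : EuclideanSpace ℝ (Fin 2), pt ≠ qt ∧
      pt ∈ (⋂ n : ℕ, subTriE Ge12e i (n + 1)) ∧
      qt ∈ (⋂ n : ℕ, subTriE Ge12e i (n + 1)) := by
  have hBdd : ∀ n : ℕ, Bornology.IsBounded (subTriE Ge12e i n) := fun n =>
    ((Set.finite_range _).isCompact_convexHull ℝ).isBounded
  have main : ∀ n : ℕ,
      euclPt 1 0 ∈ subTriE Ge12e i n ∧
      (∃ t : ℝ, 0 ≤ t ∧ t ≤ 1 ∧ euclPt t t ∈ subTriE Ge12e i n) ∧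
      Real.sqrt 2 / 2 ≤ Metric.diam (subTriE Ge12e i n) := by
    intro n
    have hb := abBounds i n
    refine ⟨(vertexLemma i n).2.1, ⟨(abSeq i n).2, hb.2.2.1, hb.2.2.2,
      (vertexLemma i n).2.2⟩, ?_⟩
    calc Real.sqrt 2 / 2 ≤ dist (euclPt 1 0) (euclPt (abSeq i n).2 (abSeq i n).2) :=
          dist_ge _
      _ ≤ Metric.diam (subTriE Ge12e i n) :=
          Metric.dist_le_diam_of_mem (hBdd n) (vertexLemma i n).2.1 (vertexLemma i n).2.2
  constructor
  · exact fun n _ => main n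
  · -- the limit diagonal point
    set L : ℝ := ⨆ n, min (abSeq i n).1 (abSeq i n).2 with hLdef
    have hBddAbove : BddAbove (Set.range fun n => min (abSeq i n).1 (abSeq i n).2) := by
      refine ⟨1, ?_⟩
      rintro x ⟨n, rfl⟩
      have hb := abBounds i n
      simp only [min_le_iff]
      left; exact hb.2.1
    have hLlow : ∀ n, min (abSeq i n).1 (abSeq i n).2 ≤ L :=
      fun n => le_ciSup hBddAbove n
    have hLhigh : ∀ n, L ≤ max (abSeq i n).1 (abSeq i n).2 :=
      fun n => ciSup_le (fun m => minLeMax i m n)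
    have hLmem : ∀ n, euclPt L L ∈ subTriE Ge12e i n :=
      fun n => diagMem i n L (hLlow n) (hLhigh n)
    refine ⟨euclPt 1 0, euclPt L L, ?_, ?_, ?_⟩
    · intro h
      have h0 : (1:ℝ) = L := congrArg (fun v => v 0) h
      have h1 : (0:ℝ) = L := congrArg (fun v => v 1) h
      linarith
    · exact Set.mem_iInter.2 fun n => (main (n+1)).1
    · exact Set.mem_iInter.2 fun n => hLmem (n+1)
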